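/- Let p be a prime and G a finite p-group. Let u_1,…,u_n be group words in variables x_1,…,x_n of the form u_i = x_i^{m_i} v_i, where each v_i is a word depending only on the variables x_{i+1},…,x_n, and each exponent m_i is coprime to p. Then the map f_{u_1,…,u_n} : G^n → G^n, (g_1,…,g_n) ↦ (u_1(g_1,…,g_n),…,u_n(g_1,…,g_n)), is bijective. -/
import Mathlib

/-- In a finite `p`-group, if `u_i = x_i^{m_i} v_i` with `(m_i, p) = 1` and `v_i`
a word only in the variables `x_{i+1},…,x_n`, then the substitution map
`f_{u_1,…,u_n} : G^n → G^n` is bijective. -/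
theorem substitution_map_bijective
    (p : ℕ) (hp : p.Prime) {G : Type*} [Group G] [Finite G]
    (hpG : IsPGroup p G) (n : ℕ)
    (m : Fin n → ℤ) (hm : ∀ i, IsCoprime (m i) (p : ℤ))
    (v : Fin n → FreeGroup (Fin n))
    (hv : ∀ i, v i ∈ Subgroup.closure (FreeGroup.of '' {j : Fin n | i < j}))
    (u : Fin n → FreeGroup (Fin n))
    (hu : ∀ i, u i = FreeGroup.of i ^ (m i) * v i) :
    Function.Bijective
      (fun g : Fin n → G => fun i => FreeGroup.lift g (u i)) := by
  haveI : Fact p.Prime := ⟨hp⟩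
  obtain ⟨k, hk⟩ := IsPGroup.iff_card.mp hpG
  -- zpow by m i is injective on G
  have hpowinj : ∀ i : Fin n, ∀ a b : G, a ^ (m i) = b ^ (m i) → a = b := by
    intro i a b hab
    have hco : IsCoprime (m i) ((Nat.card G : ℤ)) := by
      rw [hk]; push_cast; exact (hm i).pow_right
    obtain ⟨s, t, hst⟩ := hco
    have key : ∀ c : G, (c ^ (m i)) ^ s = c := by
      intro c
      have h1 : c ^ (s * m i + t * (Nat.card G : ℤ)) = c ^ (1 : ℤ) := by rw [hst]
      rw [zpow_add, zpow_mul, zpow_one, mul_comm t, zpow_mul,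
        zpow_natCast, pow_card_eq_one', one_zpow, mul_one] at h1
      rw [← zpow_mul, mul_comm, zpow_mul, h1]
    calc a = (a ^ (m i)) ^ s := (key a).symm
      _ = (b ^ (m i)) ^ s := by rw [hab]
      _ = b := key b
  rw [Finite.injective_iff_bijective.symm]
  intro g g' hgg'
  simp only [funext_iff] at hgg'
  have key : ∀ i : Fin n, (∀ j, i < j → g j = g' j) → g i = g' i := by
    intro i hj
    have hvag : FreeGroup.lift g (v i) = FreeGroup.lift g' (v i) := by
      refine Subgroup.closure_induction (k := FreeGroup.of '' {j : Fin n | i < j})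
        (p := fun w _ => FreeGroup.lift g w = FreeGroup.lift g' w)
        ?_ ?_ ?_ ?_ (hv i)
      · rintro x ⟨j, hjmem, rfl⟩
        simp only [FreeGroup.lift_apply_of]
        exact hj j hjmem
      · simp
      · intro x y _ _ hx hy; simp [map_mul, hx, hy]
      · intro x _ hx; simp [map_inv, hx]
    have h := hgg' i
    rw [hu i, map_mul, map_mul, map_zpow, map_zpow, FreeGroup.lift_apply_of,
      FreeGroup.lift_apply_of, hvag] at h
    have h2 : g i ^ (m i) = g' i ^ (m i) := mul_right_cancel h
    exact hpowinj i _ _ h2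
  have H : ∀ N : ℕ, ∀ i : Fin n, n - i.val ≤ N → g i = g' i := by
    intro N
    induction N with
    | zero => intro i h; omega
    | succ N ih =>
        intro i _
        apply key
        intro j hij
        apply ih
        have : i.val < j.val := hij
        omega
  funext i
  exact H n i (by omega)
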